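/- arXiv:2503.16697 — 3 statements merged into one kernel-verified Lean document; each statement's English description precedes it below -/
import Mathlib

section
/- Let k be a field of prime characteristic p, let P be a finite p-group, and let α be an automorphism of P with no nontrivial fixed point (α(u) = u implies u = 1). Then the action of P on the set P given by u • x = u x α(u)⁻¹ is transitive, and consequently the kP-module (kP)_α obtained by k-linearly extending this action is projective (indeed free of rank 1, isomorphic to kP). -/
namespace HHPaper

open MonoidAlgebra

attribute [local instance] LieRing.ofAssociativeRing

section Derivations

variable {k A : Type*} [CommRing k] [Ring A] [Algebra k A]

/-- `f` is a derivation on the associative unital `k`-algebra `A`. -/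
def IsDerivation (f : Module.End k A) : Prop :=
  ∀ a b : A, f (a * b) = f a * b + a * f b

lemma IsDerivation.add {f g : Module.End k A} (hf : IsDerivation f) (hg : IsDerivation g) :
    IsDerivation (f + g) := by
  intro a b
  simp only [LinearMap.add_apply, hf a b, hg a b, add_mul, mul_add]
  abel

lemma IsDerivation.zero : IsDerivation (0 : Module.End k A) := by
  intro a b; simp

lemma IsDerivation.smul (c : k) {f : Module.End k A} (hf : IsDerivation f) :
    IsDerivation (c • f) := by
  intro a b
  simp only [LinearMap.smul_apply, hf a b, smul_add, smul_mul_assoc, mul_smul_comm]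

lemma IsDerivation.lie {f g : Module.End k A} (hf : IsDerivation f) (hg : IsDerivation g) :
    IsDerivation ⁅f, g⁆ := by
  intro a b
  simp only [Ring.lie_def, LinearMap.sub_apply, Module.End.mul_apply]
  rw [hg a b, hf a b, map_add, map_add, hf (g a) b, hf a (g b), hg (f a) b, hg a (f b)]
  simp only [sub_mul, mul_sub, add_mul, mul_add]
  abel

variable (k A) in
/-- The Lie algebra of derivations on `A`, as a Lie subalgebra of `Module.End k A`. -/
def derivLie : LieSubalgebra k (Module.End k A) where
  carrier := {f | IsDerivation f}
  add_mem' := fun hf hg => hf.add hg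
  zero_mem' := IsDerivation.zero
  smul_mem' := fun c _ hf => hf.smul c
  lie_mem' := fun hf hg => hf.lie hg

@[simp] lemma mem_derivLie {f : Module.End k A} :
    f ∈ derivLie k A ↔ IsDerivation f := Iff.rfl

variable (k) in
/-- The inner derivation `[c, -]` associated with `c : A`. -/
def innerDeriv (c : A) : Module.End k A :=
  LinearMap.mulLeft k c - LinearMap.mulRight k c

@[simp] lemma innerDeriv_apply (c a : A) : innerDeriv k c a = c * a - a * c := rfl

lemma innerDeriv_isDerivation (c : A) : IsDerivation (innerDeriv k c) := by
  intro a b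
  simp only [innerDeriv_apply, sub_mul, mul_sub, mul_assoc]
  abel

lemma innerDeriv_add (c d : A) :
    innerDeriv k (c + d) = innerDeriv k c + innerDeriv k d := by
  ext a; simp only [innerDeriv_apply, LinearMap.add_apply, add_mul, mul_add]; abel

lemma innerDeriv_smul (s : k) (c : A) :
    innerDeriv k (s • c) = s • innerDeriv k c := by
  ext a
  simp only [innerDeriv_apply, LinearMap.smul_apply, smul_sub, smul_mul_assoc, mul_smul_comm]

lemma innerDeriv_zero : innerDeriv k (0 : A) = 0 := by
  ext a; simp

variable (k A) in
/-- The Lie ideal of inner derivations inside the Lie algebra of derivations. -/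
def innerIdeal : LieIdeal k (derivLie k A) where
  carrier := {f | ∃ c : A, (f : Module.End k A) = innerDeriv k c}
  add_mem' := by
    rintro f g ⟨c, hc⟩ ⟨d, hd⟩
    exact ⟨c + d, by simp [innerDeriv_add, hc, hd]⟩
  zero_mem' := ⟨0, by simp [innerDeriv_zero]⟩
  smul_mem' := by
    rintro s f ⟨c, hc⟩
    exact ⟨s • c, by rw [innerDeriv_smul]; rw [← hc]; rfl⟩
  lie_mem := by
    rintro x m ⟨c, hc⟩
    refine ⟨(x : Module.End k A) c, ?_⟩
    have hx : IsDerivation (x : Module.End k A) := x.2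
    ext a
    have hb : ((⁅x, m⁆ : derivLie k A) : Module.End k A) =
        ⁅(x : Module.End k A), (m : Module.End k A)⁆ := rfl
    rw [hb, hc]
    simp only [Ring.lie_def, LinearMap.sub_apply, Module.End.mul_apply, innerDeriv_apply,
      map_sub, hx c a, hx a c]
    abel

variable (k A) in
/-- First Hochschild cohomology of `A`, as the quotient Lie algebra of derivations
modulo inner derivations. -/
abbrev HH1 := (derivLie k A) ⧸ (innerIdeal k A)

variable (k A) in
/-- The Jacobson radical of `A`, regarded as a `k`-subspace of `A`. -/
def jacRad : Submodule k A :=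
  Submodule.restrictScalars k (Ideal.jacobson (⊥ : Ideal A))

variable (k A) in
/-- The Lie subalgebra of derivations with image contained in the `m`-th power of
the Jacobson radical. -/
def derivRadLie (m : ℕ) : LieSubalgebra k (Module.End k A) where
  carrier := {f | IsDerivation f ∧ LinearMap.range f ≤ (jacRad k A) ^ m}
  add_mem' := by
    rintro f g ⟨hf, hf'⟩ ⟨hg, hg'⟩
    refine ⟨hf.add hg, ?_⟩
    rintro x ⟨a, rfl⟩
    exact add_mem (hf' ⟨a, rfl⟩) (hg' ⟨a, rfl⟩)
  zero_mem' := ⟨IsDerivation.zero, by rintro x ⟨a, rfl⟩; simp⟩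
  smul_mem' := by
    rintro s f ⟨hf, hf'⟩
    refine ⟨hf.smul s, ?_⟩
    rintro x ⟨a, rfl⟩
    exact Submodule.smul_mem _ s (hf' ⟨a, rfl⟩)
  lie_mem' := by
    rintro f g ⟨hf, hf'⟩ ⟨hg, hg'⟩
    refine ⟨hf.lie hg, ?_⟩
    rintro x ⟨a, rfl⟩
    have : ⁅f, g⁆ a = f (g a) - g (f a) := by
      simp [Ring.lie_def, Module.End.mul_apply]
    rw [this]
    exact sub_mem (hf' ⟨g a, rfl⟩) (hg' ⟨f a, rfl⟩)

@[simp] lemma mem_derivRadLie {m : ℕ} {f : Module.End k A} :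
    f ∈ derivRadLie k A m ↔ IsDerivation f ∧ LinearMap.range f ≤ (jacRad k A) ^ m := Iff.rfl

variable (k A) in
/-- The Loewy length of `A`: the least positive `n` with `J(A)^n = 0`. -/
noncomputable def loewyLength : ℕ :=
  sInf {n : ℕ | 0 < n ∧ (jacRad k A) ^ n = ⊥}

/-- A semisimple-style multiplicity freeness: any two isomorphic simple submodules
coincide. -/
def IsMultiplicityFree (R M : Type*) [Ring R] [AddCommGroup M] [Module R M] : Prop :=
  ∀ S T : Submodule R M, IsSimpleModule R S → IsSimpleModule R T →
    Nonempty (S ≃ₗ[R] T) → S = T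

end Derivations


section GroupAlgebra

open MonoidAlgebra

variable (k : Type*) [CommRing k] {P E : Type*} [Group P] [Group E]

/-- The subgroup `[P,E]` generated by the elements `(ᵉu)u⁻¹`. -/
def commSubgroupE (φ : E →* MulAut P) : Subgroup P :=
  Subgroup.closure {x : P | ∃ (e : E) (u : P), x = φ e u * u⁻¹}

/-- A linear endomorphism of `kP` is `E`-stable if it commutes with the `E`-action. -/
def IsEStable (φ : E →* MulAut P) (f : Module.End k (MonoidAlgebra k P)) : Prop :=
  ∀ (e : E) (a : MonoidAlgebra k P),
    f (MonoidAlgebra.domCongr k k (φ e) a) = MonoidAlgebra.domCongr k k (φ e) (f a)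

/-- The Lie algebra `Der(kP)^E` of `E`-stable derivations on the group algebra `kP`. -/
def eStableDerivLie (φ : E →* MulAut P) :
    LieSubalgebra k (Module.End k (MonoidAlgebra k P)) where
  carrier := {f | IsDerivation f ∧ IsEStable k φ f}
  add_mem' := by
    rintro f g ⟨hf, hf'⟩ ⟨hg, hg'⟩
    exact ⟨hf.add hg, fun e a => by simp [LinearMap.add_apply, hf' e a, hg' e a]⟩
  zero_mem' := ⟨IsDerivation.zero, fun e a => by simp⟩
  smul_mem' := by
    rintro s f ⟨hf, hf'⟩
    refine ⟨hf.smul s, fun e a => ?_⟩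
    simp only [LinearMap.smul_apply, hf' e a, map_smul]
  lie_mem' := by
    rintro f g ⟨hf, hf'⟩ ⟨hg, hg'⟩
    refine ⟨hf.lie hg, fun e a => ?_⟩
    simp only [Ring.lie_def, LinearMap.sub_apply, Module.End.mul_apply, hf' e, hg' e, map_sub]

@[simp] lemma mem_eStableDerivLie {φ : E →* MulAut P} {f : Module.End k (MonoidAlgebra k P)} :
    f ∈ eStableDerivLie k φ ↔ IsDerivation f ∧ IsEStable k φ f := Iff.rfl

end GroupAlgebra

section Commutant

variable (k : Type*) [CommRing k] {Q : Type*} [AddCommGroup Q] [Module k Q]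
  {E : Type*} [Group E]

/-- The Lie subalgebra of `Module.End k Q` of endomorphisms commuting with a given
`E`-action, i.e. `End_{kE}(Q)`. -/
def commutantLie (ρ : E →* (Q ≃ₗ[k] Q)) : LieSubalgebra k (Module.End k Q) where
  carrier := {g | ∀ (e : E) (x : Q), g (ρ e x) = ρ e (g x)}
  add_mem' := by
    intro f g hf hg e x
    simp [LinearMap.add_apply, hf e x, hg e x]
  zero_mem' := by intro e x; simp
  smul_mem' := by
    intro s f hf e x
    simp [LinearMap.smul_apply, hf e x]
  lie_mem' := by
    intro f g hf hg e x
    simp only [Ring.lie_def, LinearMap.sub_apply, Module.End.mul_apply, hf e, hg e, map_sub]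

end Commutant

section Twist

variable (k : Type*) [CommRing k] {P : Type*} [Group P]

/-- The representation of `P` on `kP` in which `u` acts on a basis element `x` by
`u • x = u x α(u)⁻¹`, for an automorphism `α` of `P`. -/
noncomputable def twistRep (α : MulAut P) : Representation k P (MonoidAlgebra k P) where
  toFun u := LinearMap.mulRight k (MonoidAlgebra.single ((α u)⁻¹) (1 : k)) ∘ₗ
      LinearMap.mulLeft k (MonoidAlgebra.single u (1 : k))
  map_one' := by
    ext x
    simp [MonoidAlgebra.one_def]
  map_mul' u v := LinearMap.ext fun x => by
    simp only [LinearMap.coe_comp, Function.comp_apply, LinearMap.mulLeft_apply,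
      LinearMap.mulRight_apply, Module.End.mul_apply, map_mul, mul_inv_rev]
    rw [show (MonoidAlgebra.single (u * v) (1 : k)) =
          MonoidAlgebra.single u 1 * MonoidAlgebra.single v 1 from by
        simp [MonoidAlgebra.single_mul_single],
      show (MonoidAlgebra.single ((α v)⁻¹ * (α u)⁻¹) (1 : k)) =
          MonoidAlgebra.single ((α v)⁻¹) 1 * MonoidAlgebra.single ((α u)⁻¹) 1 from by
        simp [MonoidAlgebra.single_mul_single]]
    simp only [mul_assoc]

@[simp] lemma twistRep_apply (α : MulAut P) (u : P) (x : MonoidAlgebra k P) :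
    twistRep k α u x = MonoidAlgebra.single u (1 : k) * x *
      MonoidAlgebra.single ((α u)⁻¹) (1 : k) := rfl

end Twist

/-- If `α` is a fixed-point-free automorphism of a finite `p`-group `P`,
then the action `u • x = u x α(u)⁻¹` of `P` on `P` is transitive, and consequently the
`kP`-module `(kP)_α` obtained from this action is projective, indeed free of rank one. -/
theorem stmt15 (k : Type*) [Field k] (p : ℕ) [Fact p.Prime] [CharP k p]
    (P : Type*) [Group P] [Fintype P] (hP : IsPGroup p P)
    (α : MulAut P) (hα : ∀ u : P, α u = u → u = 1) :
    (∀ x y : P, ∃ u : P, u * x * (α u)⁻¹ = y) ∧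
    Module.Projective (MonoidAlgebra k P) (twistRep k α).asModule ∧
    Nonempty ((twistRep k α).asModule ≃ₗ[MonoidAlgebra k P] MonoidAlgebra k P) := by
  -- the map `u ↦ u * (α u)⁻¹` is injective, hence bijective
  have h1 : Function.Injective (fun u : P => u * (α u)⁻¹) := by
    intro u v h
    simp only at h
    have key : v⁻¹ * u = (α v)⁻¹ * α u := by
      calc v⁻¹ * u = v⁻¹ * (u * (α u)⁻¹) * α u := by group
        _ = v⁻¹ * (v * (α v)⁻¹) * α u := by rw [h]
        _ = (α v)⁻¹ * α u := by group
    have hw : α (v⁻¹ * u) = v⁻¹ * u := by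
      rw [map_mul, map_inv, ← key]
    exact (inv_mul_eq_one.mp (hα _ hw)).symm
  have h2 : Function.Surjective (fun u : P => u * (α u)⁻¹) :=
    Finite.injective_iff_surjective.mp h1
  -- transitivity
  have htrans : ∀ x y : P, ∃ u : P, u * x * (α u)⁻¹ = y := by
    intro x y
    obtain ⟨z, hz⟩ := h2 x
    simp only at hz
    have hginj : Function.Injective (fun u : P => u * x * (α u)⁻¹) := by
      intro u v h
      simp only at h
      set w := v⁻¹ * u with hwdef
      have hwx : w * x = x * α w := by
        have : α w = (α v)⁻¹ * α u := by rw [hwdef, map_mul, map_inv]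
        rw [this, hwdef]
        calc v⁻¹ * u * x = v⁻¹ * (u * x * (α u)⁻¹) * α u := by group
          _ = v⁻¹ * (v * x * (α v)⁻¹) * α u := by rw [h]
          _ = x * ((α v)⁻¹ * α u) := by group
      have hconj : z⁻¹ * w * z = (α z)⁻¹ * α w * α z := by
        rw [← hz] at hwx
        calc z⁻¹ * w * z
            = z⁻¹ * (w * (z * (α z)⁻¹)) * α z := by group
          _ = z⁻¹ * (z * (α z)⁻¹ * α w) * α z := by rw [hwx]
          _ = (α z)⁻¹ * α w * α z := by group
      have hfix : α (z⁻¹ * w * z) = z⁻¹ * w * z := by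
        rw [map_mul, map_mul, map_inv, ← hconj]
      have hone : z⁻¹ * w * z = 1 := hα _ hfix
      have hw1 : w = 1 := by
        have := congrArg (fun t => z * t * z⁻¹) hone
        calc w = z * (z⁻¹ * w * z) * z⁻¹ := by group
          _ = z * 1 * z⁻¹ := by rw [hone]
          _ = 1 := by group
      have : v⁻¹ * u = 1 := by rw [← hwdef, hw1]
      exact (inv_mul_eq_one.mp this).symm
    exact Finite.injective_iff_surjective.mp hginj y
  refine ⟨htrans, ?_⟩
  -- the bijection `e u = u * (α u)⁻¹`
  let e : P ≃ P := Equiv.ofBijective (fun u : P => u * (α u)⁻¹) ⟨h1, h2⟩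
  have he : ∀ u : P, e u = u * (α u)⁻¹ := fun u => rfl
  -- the additive equivalence `kP ≃+ (kP)_α`
  let F : MonoidAlgebra k P ≃+ (twistRep k α).asModule :=
    ((MonoidAlgebra.coeffAddEquiv.trans (Finsupp.domCongr e : (P →₀ k) ≃+ (P →₀ k))).trans
      MonoidAlgebra.coeffAddEquiv.symm).trans
      (twistRep k α).asModuleEquiv.symm.toAddEquiv
  have hF : ∀ (a : P) (b : k),
      F (MonoidAlgebra.single a b) =
        (twistRep k α).asModuleEquiv.symm (MonoidAlgebra.single (e a) b) := by
    intro a b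
    show (twistRep k α).asModuleEquiv.symm
      (MonoidAlgebra.ofCoeff ((Finsupp.domCongr e) (Finsupp.single a b))) = _
    rw [Finsupp.domCongr_apply, Finsupp.equivMapDomain_single, MonoidAlgebra.ofCoeff_single]
  have key : ∀ (g : P) (c : k) (m : MonoidAlgebra k P),
      F (MonoidAlgebra.single g c * m) = (MonoidAlgebra.single g c : MonoidAlgebra k P) • F m := by
    intro g c m
    induction m using MonoidAlgebra.induction_linear with
    | zero => simp
    | add f h hf hh => rw [mul_add, map_add, hf, hh, map_add, smul_add]
    | single v d =>
        rw [MonoidAlgebra.single_mul_single, hF, hF]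
        have hsm : (MonoidAlgebra.single g c : MonoidAlgebra k P) •
            ((twistRep k α).asModuleEquiv.symm (MonoidAlgebra.single (e v) d)) =
            (twistRep k α).asModuleEquiv.symm
              ((twistRep k α).asAlgebraHom (MonoidAlgebra.single g c)
                (MonoidAlgebra.single (e v) d)) := rfl
        rw [hsm, Representation.asAlgebraHom_single]
        congr 1
        simp only [LinearMap.smul_apply, twistRep_apply]
        rw [MonoidAlgebra.single_mul_single, MonoidAlgebra.single_mul_single,
          MonoidAlgebra.smul_single]
        have hegv : e (g * v) = g * e v * (α g)⁻¹ := by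
          rw [he, he, map_mul, mul_inv_rev]
          group
        rw [hegv]
        congr 1
        simp [mul_comm]
  have hsmul : ∀ (r m : MonoidAlgebra k P), F (r * m) = r • F m := by
    intro r m
    induction r using MonoidAlgebra.induction_linear with
    | zero => simp
    | add f h hf hh => rw [add_mul, map_add, hf, hh, add_smul]
    | single g c => exact key g c m
  let Φ : MonoidAlgebra k P ≃ₗ[MonoidAlgebra k P] (twistRep k α).asModule :=
    { toFun := F
      invFun := F.symm
      left_inv := F.left_inv
      right_inv := F.right_inv
      map_add' := F.map_add
      map_smul' := fun r m => by
        simpa [smul_eq_mul] using hsmul r m }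
  exact ⟨Module.Projective.of_equiv Φ, ⟨Φ.symm⟩⟩

end HHPaper
end

section
/- Let k be a field and A a finite-dimensional associative unital k-algebra. For m ≥ 1 let Der_m(A) denote the space of derivations on A with image contained in J(A)^m. Then: (i) for all positive integers m, n, [Der_m(A), Der_n(A)] ⊆ Der_{m+n−1}(A); (ii) Der_1(A) is a Lie subalgebra of Der(A), and for every positive integer m, Der_m(A) is a Lie ideal in Der_1(A); (iii) Der_2(A) is a nilpotent ideal in Der_1(A): if ℓℓ(A) ≤ 2 then Der_2(A) = 0, and if ℓℓ(A) > 2 then the nilpotency class of Der_2(A) is at most ℓℓ(A) − 2. -/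
namespace HHPaper

attribute [local instance 100] LieRing.ofAssociativeRing

open MonoidAlgebra

section Proof16

variable {k A : Type*} [Field k] [Ring A] [Algebra k A]


lemma ideal_pow_succ_le' (I : Ideal A) : ∀ n : ℕ, I ^ (n + 1) ≤ I * I ^ n
  | 0 => by
      rw [Submodule.pow_one, Submodule.pow_zero, Ideal.one_eq_top]
      intro x hx
      simpa using Ideal.mul_mem_mul hx (Submodule.mem_top (x := (1 : A)))
  | n + 1 => by
      rw [Submodule.pow_succ]
      calc I ^ (n + 1) * I ≤ (I * I ^ n) * I :=
            Ideal.mul_mono_left (ideal_pow_succ_le' I n)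
        _ = I * (I ^ n * I) := by rw [Ideal.mul_assoc]
        _ = I * I ^ (n + 1) := by rw [← Submodule.pow_succ]

lemma jacRad_pow (n : ℕ) :
    jacRad k A ^ (n + 1) =
      Submodule.restrictScalars k (Ideal.jacobson (⊥ : Ideal A) ^ (n + 1)) := by
  induction n with
  | zero => rw [Submodule.pow_one, Submodule.pow_one]; rfl
  | succ n ih =>
    rw [Submodule.pow_succ, ih]; rfl

lemma jac_mul_mem_right {a c : A} (ha : a ∈ Ideal.jacobson (⊥ : Ideal A)) :
    a * c ∈ Ideal.jacobson (⊥ : Ideal A) :=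
  Ideal.mul_mem_right c _ ha

lemma mem_mul_span {x y : A}
    (h : y ∈ Ideal.jacobson (⊥ : Ideal A) * Submodule.span A {x}) :
    ∃ a ∈ Ideal.jacobson (⊥ : Ideal A), y = a * x := by
  refine Submodule.mul_induction_on h ?_ ?_
  · rintro m hm n hn
    obtain ⟨c, rfl⟩ := Submodule.mem_span_singleton.mp hn
    exact ⟨m * c, jac_mul_mem_right hm, by rw [smul_eq_mul, mul_assoc]⟩
  · rintro a b ⟨p, hp, rfl⟩ ⟨q, hq, rfl⟩
    exact ⟨p + q, Submodule.add_mem _ hp hq, (add_mul _ _ _).symm⟩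

lemma nakayama : ∀ s : Finset A, ∀ M : Ideal A,
    Submodule.span A (s : Set A) = M → M ≤ Ideal.jacobson (⊥ : Ideal A) * M → M = ⊥ := by
  classical
  intro s
  induction s using Finset.induction_on with
  | empty => intro M hM _; simp [← hM]
  | @insert x t hxt ih =>
    intro M hM hle
    have hxM : x ∈ M := hM ▸ Submodule.subset_span (by simp)
    have hsplit : M = Submodule.span A {x} ⊔ Submodule.span A (t : Set A) := by
      rw [← hM, Finset.coe_insert, Submodule.span_insert]
    have hx' : x ∈ Ideal.jacobson (⊥ : Ideal A) * Submodule.span A {x} ⊔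
        Ideal.jacobson (⊥ : Ideal A) * Submodule.span A (t : Set A) := by
      have := hle hxM
      rwa [hsplit, Ideal.mul_sup] at this
    obtain ⟨y, hy, z, hz, hxyz⟩ := Submodule.mem_sup.mp hx'
    obtain ⟨a, haJ, rfl⟩ := mem_mul_span hy
    have hztx : z ∈ Submodule.span A (t : Set A) :=
      Submodule.mul_le.mpr (fun p _ q hq => by
        simpa [smul_eq_mul] using Submodule.smul_mem (Submodule.span A (t : Set A)) p hq) hz
    have h1 : (1 - a) * x = z := by
      rw [sub_mul, one_mul]
      exact (eq_sub_of_add_eq' hxyz).symm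
    obtain ⟨u, hu⟩ := Ideal.exists_mul_sub_mem_of_sub_one_mem_jacobson (1 - a)
      (by simpa using Submodule.neg_mem _ haJ)
    have huu : u * (1 - a) = 1 := by rwa [Ideal.mem_bot, sub_eq_zero] at hu
    have hxspan : x ∈ Submodule.span A (t : Set A) := by
      have hxeq : x = u * ((1 - a) * x) := by rw [← mul_assoc, huu, one_mul]
      rw [hxeq, h1]
      simpa [smul_eq_mul] using Submodule.smul_mem (Submodule.span A (t : Set A)) u hztx
    have hM' : Submodule.span A (t : Set A) = M := by
      apply le_antisymm
      · rw [hsplit]; exact le_sup_right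
      · rw [hsplit]
        exact sup_le (Submodule.span_le.mpr (by simpa using hxspan)) le_rfl
    exact ih M hM' hle

lemma exists_jac_pow_bot [FiniteDimensional k A] :
    ∃ n : ℕ, 0 < n ∧ jacRad k A ^ n = ⊥ := by
  obtain ⟨n, hn⟩ := IsArtinian.monotone_stabilizes (R := k) (M := A)
    ⟨fun n => OrderDual.toDual (jacRad k A ^ (n + 1)), by
      intro i j hij
      simp only [OrderDual.toDual_le_toDual]
      rw [jacRad_pow, jacRad_pow]
      exact fun x hx => Ideal.pow_le_pow_right (Nat.add_le_add_right hij 1) hx⟩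
  have h2 : jacRad k A ^ (n + 1) = jacRad k A ^ (n + 1 + 1) := hn (n + 1) (Nat.le_succ n)
  rw [jacRad_pow, jacRad_pow] at h2
  have heq : Ideal.jacobson (⊥ : Ideal A) ^ (n + 1) = Ideal.jacobson (⊥ : Ideal A) ^ (n + 1 + 1) :=
    Submodule.restrictScalars_injective k A A h2
  obtain ⟨s, hs⟩ : (Submodule.restrictScalars k (Ideal.jacobson (⊥ : Ideal A) ^ (n + 1))).FG :=
    IsNoetherian.noetherian _
  have hspan : Submodule.span A (s : Set A) = Ideal.jacobson (⊥ : Ideal A) ^ (n + 1) := by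
    apply le_antisymm
    · rw [Submodule.span_le]
      intro x hx
      have : x ∈ Submodule.span k (s : Set A) := Submodule.subset_span hx
      rw [hs] at this; exact this
    · intro x hx
      have hx' : x ∈ Submodule.span k (s : Set A) := by rw [hs]; exact hx
      exact Submodule.span_le_restrictScalars k A (s : Set A) hx'
  have hle : Ideal.jacobson (⊥ : Ideal A) ^ (n + 1) ≤
      Ideal.jacobson (⊥ : Ideal A) * Ideal.jacobson (⊥ : Ideal A) ^ (n + 1) :=
    heq.le.trans (ideal_pow_succ_le' _ (n + 1))
  have hbot := nakayama s _ hspan hle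
  refine ⟨n + 1, Nat.succ_pos n, ?_⟩
  rw [jacRad_pow, hbot]
  rfl

lemma deriv_maps_pow {f : Module.End k A} (hf : IsDerivation f) {m : ℕ}
    (hr : LinearMap.range f ≤ jacRad k A ^ (m + 1)) :
    ∀ n : ℕ, jacRad k A ^ (n + 1) ≤ Submodule.comap f (jacRad k A ^ (m + n + 1)) := by
  intro n
  induction n with
  | zero => intro x hx; exact hr ⟨x, rfl⟩
  | succ n ih =>
    rw [Submodule.pow_succ]
    refine Submodule.mul_le.mpr fun a ha b hb => ?_
    have hfa : f a ∈ jacRad k A ^ (m + n + 1) := ih ha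
    have hfb : f b ∈ jacRad k A ^ (m + 1) := hr ⟨b, rfl⟩
    simp only [Submodule.mem_comap, hf a b]
    apply Submodule.add_mem
    · have h1 := Submodule.mul_mem_mul hfa hb
      rwa [← Submodule.pow_succ] at h1
    · have h2 := Submodule.mul_mem_mul ha hfb
      rwa [← pow_add, show n + 1 + (m + 1) = m + (n + 1) + 1 by omega] at h2

lemma bracket_range_le {f g : Module.End k A} (hf : IsDerivation f) (hg : IsDerivation g)
    {m n : ℕ} (hfr : LinearMap.range f ≤ jacRad k A ^ (m + 1))
    (hgr : LinearMap.range g ≤ jacRad k A ^ (n + 1)) :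
    LinearMap.range ⁅f, g⁆ ≤ jacRad k A ^ (m + n + 1) := by
  rintro _ ⟨a, rfl⟩
  have h1 : f (g a) ∈ jacRad k A ^ (m + n + 1) :=
    deriv_maps_pow hf hfr n (hgr ⟨a, rfl⟩)
  have h2 : g (f a) ∈ jacRad k A ^ (m + n + 1) := by
    have := deriv_maps_pow hg hgr m (hfr ⟨a, rfl⟩)
    have h2' := this
    have := deriv_maps_pow hg hgr m (hfr ⟨a, rfl⟩)
    rwa [show n + m + 1 = m + n + 1 by omega] at this
  have hb : ⁅f, g⁆ a = f (g a) - g (f a) := by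
    simp [Ring.lie_def, Module.End.mul_apply]
  rw [hb]
  exact Submodule.sub_mem _ h1 h2

end Proof16


/-- For a finite-dimensional algebra `A`, with `Der_m(A)` the derivations
with image in `J(A)^m`: (i) `[Der_m, Der_n] ⊆ Der_{m+n-1}`; (ii) `Der_1` is a Lie subalgebra
and each `Der_m` is a Lie ideal in `Der_1`; (iii) `Der_2` is a nilpotent ideal in `Der_1`:
if `ℓℓ(A) ≤ 2` then `Der_2 = 0`, and if `ℓℓ(A) > 2` its nilpotency class is at most
`ℓℓ(A) - 2`. -/
theorem stmt16 (k A : Type*) [Field k] [Ring A] [Algebra k A] [FiniteDimensional k A] :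
    -- (i)
    (∀ m n : ℕ, 1 ≤ m → 1 ≤ n →
      ∀ f g : Module.End k A, f ∈ derivRadLie k A m → g ∈ derivRadLie k A n →
        ⁅f, g⁆ ∈ derivRadLie k A (m + n - 1)) ∧
    -- (ii) : `Der_1` is a Lie subalgebra of `Der(A)` ...
    (∀ f g : Module.End k A, f ∈ derivRadLie k A 1 → g ∈ derivRadLie k A 1 →
        ⁅f, g⁆ ∈ derivRadLie k A 1) ∧
    -- ... and `Der_m` is a Lie ideal in `Der_1` for every positive `m`
    (∀ m : ℕ, 1 ≤ m →
      ∀ f g : Module.End k A, f ∈ derivRadLie k A 1 → g ∈ derivRadLie k A m →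
        ⁅f, g⁆ ∈ derivRadLie k A m) ∧
    -- (iii) : `Der_2` is a nilpotent ideal in `Der_1`
    (LieRing.IsNilpotent (derivRadLie k A 2)) ∧
    (loewyLength k A ≤ 2 → derivRadLie k A 2 = ⊥) ∧
    (2 < loewyLength k A →
      LieModule.lowerCentralSeries k ↥(derivRadLie k A 2) ↥(derivRadLie k A 2) (loewyLength k A - 2) = ⊥) := by
  have hSne : {n : ℕ | 0 < n ∧ jacRad k A ^ n = ⊥}.Nonempty := exists_jac_pow_bot
  have hNmem : loewyLength k A ∈ {n : ℕ | 0 < n ∧ jacRad k A ^ n = ⊥} := Nat.sInf_mem hSne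
  have hNpos : 0 < loewyLength k A := hNmem.1
  have hpow_bot : ∀ n : ℕ, loewyLength k A ≤ n → jacRad k A ^ n = ⊥ := by
    intro n hn
    obtain ⟨N', hN'⟩ : ∃ N', loewyLength k A = N' + 1 := ⟨loewyLength k A - 1, by omega⟩
    obtain ⟨n', rfl⟩ : ∃ n', n = n' + 1 := ⟨n - 1, by omega⟩
    have h3 : jacRad k A ^ (N' + 1) = ⊥ := hN' ▸ hNmem.2
    rw [jacRad_pow] at h3
    refine le_bot_iff.mp ?_
    rw [jacRad_pow]
    intro x hx
    have hx' : x ∈ Submodule.restrictScalars k (Ideal.jacobson (⊥ : Ideal A) ^ (N' + 1)) :=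
      Ideal.pow_le_pow_right (by omega) hx
    rw [h3] at hx'
    exact hx'
  have key : ∀ i : ℕ, ∀ x : ↥(derivRadLie k A 2),
      x ∈ LieModule.lowerCentralSeries k ↥(derivRadLie k A 2) ↥(derivRadLie k A 2) i →
      LinearMap.range (x : Module.End k A) ≤ jacRad k A ^ (i + 2) := by
    intro i
    induction i with
    | zero => intro x _; exact x.2.2
    | succ i ih =>
      intro x hx
      rw [LieModule.lowerCentralSeries_succ, ← LieSubmodule.mem_toSubmodule,
        LieSubmodule.lieIdeal_oper_eq_linear_span'] at hx
      refine Submodule.span_induction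
        (p := fun (y : ↥(derivRadLie k A 2)) _ => LinearMap.range (y : Module.End k A) ≤ jacRad k A ^ (i + 3))
        ?_ ?_ ?_ ?_ hx
      · rintro y ⟨u, -, v, hv, rfl⟩
        rw [LieSubalgebra.coe_bracket]
        have hu2 : LinearMap.range (u : Module.End k A) ≤ jacRad k A ^ (1 + 1) := u.2.2
        have hv2 : LinearMap.range (v : Module.End k A) ≤ jacRad k A ^ (i + 1 + 1) := ih v hv
        have hb := bracket_range_le u.2.1 v.2.1 hu2 hv2
        rwa [show 1 + (i + 1) + 1 = i + 3 by omega] at hb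
      · rintro _ ⟨a, rfl⟩
        simp only [ZeroMemClass.coe_zero, LinearMap.zero_apply]
        exact Submodule.zero_mem _
      · intro y z _ _ hy hz
        rintro _ ⟨a, rfl⟩
        have : ((↑(y + z) : Module.End k A)) a = (y : Module.End k A) a + (z : Module.End k A) a := rfl
        rw [this]
        exact Submodule.add_mem _ (hy ⟨a, rfl⟩) (hz ⟨a, rfl⟩)
      · intro c y _ hy
        rintro _ ⟨a, rfl⟩
        have : ((↑(c • y) : Module.End k A)) a = c • ((y : Module.End k A) a) := rfl
        rw [this]
        exact Submodule.smul_mem _ c (hy ⟨a, rfl⟩)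
  refine ⟨?_, ?_, ?_, ?_, ?_, ?_⟩
  · intro m n hm hn f g hf hg
    obtain ⟨m', rfl⟩ : ∃ m', m = m' + 1 := ⟨m - 1, by omega⟩
    obtain ⟨n', rfl⟩ : ∃ n', n = n' + 1 := ⟨n - 1, by omega⟩
    refine ⟨hf.1.lie hg.1, ?_⟩
    have hb := bracket_range_le hf.1 hg.1 hf.2 hg.2
    rwa [show m' + n' + 1 = m' + 1 + (n' + 1) - 1 by omega] at hb
  · intro f g hf hg
    refine ⟨hf.1.lie hg.1, ?_⟩
    have hf2 : LinearMap.range f ≤ jacRad k A ^ (0 + 1) := hf.2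
    have hg2 : LinearMap.range g ≤ jacRad k A ^ (0 + 1) := hg.2
    have hb := bracket_range_le hf.1 hg.1 hf2 hg2
    rwa [show 0 + 0 + 1 = 1 by omega] at hb
  · intro m hm f g hf hg
    obtain ⟨m', rfl⟩ : ∃ m', m = m' + 1 := ⟨m - 1, by omega⟩
    refine ⟨hf.1.lie hg.1, ?_⟩
    have hf2 : LinearMap.range f ≤ jacRad k A ^ (0 + 1) := hf.2
    have hb := bracket_range_le hf.1 hg.1 hf2 hg.2
    rwa [show 0 + m' + 1 = m' + 1 by omega] at hb
  · refine LieModule.IsNilpotent.mk (R := k) (L := ↥(derivRadLie k A 2)) (M := ↥(derivRadLie k A 2)) (k := loewyLength k A) ?_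
    rw [LieSubmodule.eq_bot_iff]
    intro x hx
    have h := key (loewyLength k A) x hx
    rw [hpow_bot _ (by omega), le_bot_iff, LinearMap.range_eq_bot] at h
    exact Subtype.ext h
  · intro h2
    rw [eq_bot_iff]
    intro f hf
    rw [LieSubalgebra.mem_bot]
    have h := (mem_derivRadLie.mp hf).2
    rw [hpow_bot 2 h2, le_bot_iff, LinearMap.range_eq_bot] at h
    exact h
  · intro hlt
    rw [LieSubmodule.eq_bot_iff]
    intro x hx
    have h := key _ x hx
    rw [show loewyLength k A - 2 + 2 = loewyLength k A by omega, hNmem.2,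
      le_bot_iff, LinearMap.range_eq_bot] at h
    exact Subtype.ext h

end HHPaper
end

section
/- Let k be a field and A a finite-dimensional associative unital k-algebra such that the canonical map Der_1(A) → HH^1(A) is surjective. Then: (a) if [Der_1(A), Der_1(A)] ⊆ Der_2(A) + IDer(A), then HH^1(A) is a solvable Lie algebra; (b) the image D_2 of Der_2(A) in HH^1(A) is a nilpotent Lie ideal of HH^1(A), and if HH^1(A) = L + D_2 for some Lie subalgebra L, then HH^1(A) is solvable if and only if L is solvable. -/
namespace HHPaper

attribute [local instance 100] LieRing.ofAssociativeRing

open MonoidAlgebra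

section NakayamaAux
variable {k A : Type*} [Field k] [Ring A] [Algebra k A]

lemma jac_smul_eq_zero_of_simple' {M : Type*} [AddCommGroup M] [Module A M]
    [IsSimpleModule A M] {a : A} (ha : a ∈ Ideal.jacobson (⊥ : Ideal A)) (s : M) :
    a • s = 0 := by
  by_cases hs : s = 0
  · simp [hs]
  · have hsurj := IsSimpleModule.toSpanSingleton_surjective A (m := s) hs
    have hco : IsCoatom (LinearMap.ker (LinearMap.toSpanSingleton A M s)) :=
      LinearMap.isCoatom_ker_of_surjective hsurj
    have hle : Ideal.jacobson (⊥ : Ideal A) ≤ LinearMap.ker (LinearMap.toSpanSingleton A M s) :=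
      sInf_le ⟨bot_le, ⟨hco⟩⟩
    simpa using hle ha

lemma nakayama_mod' {M : Type*} [AddCommGroup M] [Module A M] [Module.Finite A M]
    (h : (⊤ : Submodule A M) ≤ Ideal.jacobson (⊥ : Ideal A) • ⊤) : Subsingleton M := by
  by_contra hM
  have hnt : Nontrivial M := not_subsingleton_iff_nontrivial.mp hM
  have hcoat : IsCoatomic (Submodule A M) :=
    CompleteLattice.coatomic_of_top_compact ((Submodule.fg_iff_compact _).mp Module.Finite.fg_top)
  rcases hcoat.eq_top_or_exists_le_coatom ⊥ with h' | ⟨W, hW, -⟩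
  · exact absurd h' bot_ne_top
  · haveI : IsSimpleModule A (M ⧸ W) := isSimpleModule_iff_isCoatom.mpr hW
    have hle : Ideal.jacobson (⊥ : Ideal A) • (⊤ : Submodule A M) ≤ W := by
      refine Submodule.smul_le.mpr fun a ha m _ => ?_
      have hz : a • (Submodule.Quotient.mk m : M ⧸ W) = 0 := jac_smul_eq_zero_of_simple' ha _
      rwa [← Submodule.Quotient.mk_smul, Submodule.Quotient.mk_eq_zero] at hz
    exact hW.1 (top_le_iff.mp (le_trans h hle))

lemma nakayama_ideal' [FiniteDimensional k A] (N : Ideal A)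
    (h : N ≤ Ideal.jacobson (⊥ : Ideal A) • N) : N = ⊥ := by
  haveI : IsNoetherian A A := isNoetherian_of_tower k inferInstance
  haveI : Module.Finite A N := Module.Finite.iff_fg.mpr (IsNoetherian.noetherian N)
  have hmap : Submodule.map N.subtype (Ideal.jacobson (⊥ : Ideal A) • (⊤ : Submodule A N))
      = Ideal.jacobson (⊥ : Ideal A) • N := by
    rw [Submodule.map_smul'', Submodule.map_subtype_top]
  have htop : (⊤ : Submodule A N) ≤ Ideal.jacobson (⊥ : Ideal A) • ⊤ := by
    rw [← Submodule.map_le_map_iff_of_injective N.injective_subtype, hmap,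
      Submodule.map_subtype_top]
    exact h
  haveI := nakayama_mod' htop
  rw [eq_bot_iff]
  intro x hx
  have hz : (⟨x, hx⟩ : N) = 0 := Subsingleton.elim _ _
  simpa using congrArg Subtype.val hz

variable (k) in
lemma restrictScalars_mono' {I N : Ideal A} (h : I ≤ N) :
    Submodule.restrictScalars k I ≤ Submodule.restrictScalars k N := fun x hx => h hx

variable (k) in
lemma restrictScalars_smul_ideal' (I N : Ideal A) :
    Submodule.restrictScalars k (I • N) =
      Submodule.restrictScalars k I * Submodule.restrictScalars k N := by
  apply le_antisymm
  · intro x hx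
    rw [Submodule.restrictScalars_mem] at hx
    refine Submodule.smul_induction_on (p := fun x => x ∈ Submodule.restrictScalars k I * Submodule.restrictScalars k N) hx (fun a ha n hn => ?_) (fun y z hy hz => add_mem hy hz)
    exact Submodule.mul_mem_mul ha hn
  · exact Submodule.mul_le.mpr fun a ha b hb => by
      rw [Submodule.restrictScalars_mem, ← smul_eq_mul]; exact Submodule.smul_mem_smul ha hb

/-- The iterated smul chain of the Jacobson radical. -/
def jacChain' (A : Type*) [Ring A] : ℕ → Ideal A
  | 0 => Ideal.jacobson ⊥
  | (n+1) => Ideal.jacobson (⊥ : Ideal A) • jacChain' A n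

lemma jacChain_antitone' (n : ℕ) : jacChain' A (n+1) ≤ jacChain' A n := by
  induction n with
  | zero => exact Submodule.smul_le.mpr fun a _ b hb => Submodule.smul_mem _ a hb
  | succ n ih => exact Submodule.smul_le.mpr fun a ha b hb => Submodule.smul_mem_smul ha (ih hb)

variable (k) in
lemma restrictScalars_jacChain' (n : ℕ) :
    Submodule.restrictScalars k (jacChain' A n) =
      (Submodule.restrictScalars k (Ideal.jacobson (⊥ : Ideal A)))^(n+1) := by
  induction n with
  | zero => simp [jacChain', pow_one]
  | succ n ih =>
      rw [show jacChain' A (n+1) = Ideal.jacobson (⊥ : Ideal A) • jacChain' A n from rfl,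
        restrictScalars_smul_ideal', ih, ← pow_succ']

variable (k A) in
lemma exists_jacChain_eq_bot' [FiniteDimensional k A] : ∃ n, jacChain' A n = ⊥ := by
  set d : ℕ → ℕ := fun n => Module.finrank k (Submodule.restrictScalars k (jacChain' A n))
    with hd
  have hanti : ∀ n, d (n+1) ≤ d n := fun n =>
    Submodule.finrank_mono (restrictScalars_mono' k (jacChain_antitone' n))
  have hstab : ∃ n, d (n+1) = d n := by
    by_contra hc
    push_neg at hc
    have hlt : ∀ n, d (n+1) < d n := fun n => lt_of_le_of_ne (hanti n) (hc n)
    have key : ∀ n, d n + n ≤ d 0 := by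
      intro n
      induction n with
      | zero => simp
      | succ n ih => have := hlt n; omega
    have := key (d 0 + 1)
    omega
  obtain ⟨n, hn⟩ := hstab
  have heq : Submodule.restrictScalars k (jacChain' A (n+1)) =
      Submodule.restrictScalars k (jacChain' A n) :=
    Submodule.eq_of_le_of_finrank_le (restrictScalars_mono' k (jacChain_antitone' n)) hn.ge
  have heq' : jacChain' A (n+1) = jacChain' A n :=
    Submodule.restrictScalars_injective k A A heq
  refine ⟨n, nakayama_ideal' (k := k) (jacChain' A n) ?_⟩
  rw [show (Ideal.jacobson (⊥ : Ideal A) • jacChain' A n : Ideal A) = jacChain' A (n+1) from rfl,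
    heq']

end NakayamaAux

section LieAux
variable {R L : Type*} [CommRing R] [LieRing L] [LieAlgebra R L]

/-- The quotient map by a Lie ideal, as a morphism of Lie algebras. -/
def lieQuotMk (I : LieIdeal R L) : L →ₗ⁅R⁆ L ⧸ I :=
  { (LieSubmodule.Quotient.mk' I).toLinearMap with
    map_lie' := fun {x y} => LieSubmodule.Quotient.mk_bracket I x y }

lemma lieQuotMk_apply (I : LieIdeal R L) (x : L) :
    lieQuotMk I x = LieSubmodule.Quotient.mk (N := I) x := rfl

lemma lieQuotMk_surjective (I : LieIdeal R L) : Function.Surjective (lieQuotMk I) :=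
  Quot.mk_surjective

lemma lieQuotMk_ker (I : LieIdeal R L) : (lieQuotMk I).ker = I := by
  ext x
  rw [LieHom.mem_ker, lieQuotMk_apply, LieSubmodule.Quotient.mk_eq_zero']

theorem isSolvable_of_ideal_of_quot (I : LieIdeal R L) (h1 : LieAlgebra.IsSolvable I)
    (h2 : LieAlgebra.IsSolvable (L ⧸ I)) : LieAlgebra.IsSolvable L := by
  obtain ⟨j, hj⟩ := (LieAlgebra.isSolvable_iff R _).mp h2
  obtain ⟨l, hl⟩ := (LieAlgebra.isSolvable_iff R _).mp h1
  rw [LieAlgebra.isSolvable_iff R]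
  refine ⟨l + j, ?_⟩
  have hq : (LieAlgebra.derivedSeries R L j).map (lieQuotMk I) = ⊥ := by
    rw [LieIdeal.derivedSeries_map_eq j (lieQuotMk_surjective I), hj]
  have hle : LieAlgebra.derivedSeries R L j ≤ I := by
    rw [LieIdeal.map_eq_bot_iff, lieQuotMk_ker] at hq
    exact hq
  have hD : LieAlgebra.derivedSeriesOfIdeal R L l I = ⊥ :=
    (LieIdeal.derivedSeries_eq_bot_iff (I := I) l).mp hl
  rw [← le_bot_iff]
  calc LieAlgebra.derivedSeries R L (l + j)
      = LieAlgebra.derivedSeriesOfIdeal R L l (LieAlgebra.derivedSeries R L j) :=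
        LieAlgebra.derivedSeriesOfIdeal_add ⊤ l j
    _ ≤ LieAlgebra.derivedSeriesOfIdeal R L l I :=
        LieAlgebra.derivedSeriesOfIdeal_mono hle l
    _ = ⊥ := hD

lemma lieQuotMk_add (I : LieIdeal R L) (x y : L) :
    lieQuotMk I (x + y) = lieQuotMk I x + lieQuotMk I y := (lieQuotMk I).map_add x y

variable {M : Type*} [AddCommGroup M] [Module R M] [LieRingModule L M] [LieModule R L M]

lemma lieMk_add (N : LieSubmodule R L M) (x y : M) :
    LieSubmodule.Quotient.mk (N := N) (x + y) =
      LieSubmodule.Quotient.mk (N := N) x + LieSubmodule.Quotient.mk (N := N) y :=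
  Submodule.Quotient.mk_add _

lemma lieMk_smul (N : LieSubmodule R L M) (c : R) (x : M) :
    LieSubmodule.Quotient.mk (N := N) (c • x) =
      c • LieSubmodule.Quotient.mk (N := N) x :=
  Submodule.Quotient.mk_smul _ c x

lemma lieMk_sub (N : LieSubmodule R L M) (x y : M) :
    LieSubmodule.Quotient.mk (N := N) (x - y) =
      LieSubmodule.Quotient.mk (N := N) x - LieSubmodule.Quotient.mk (N := N) y :=
  Submodule.Quotient.mk_sub _

end LieAux

section Stmt17Aux
variable {k A : Type*} [Field k] [Ring A] [Algebra k A]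

lemma jacRad_pow_eq (n : ℕ) :
    (jacRad k A)^(n+1) = Submodule.restrictScalars k (jacChain' A n) :=
  (restrictScalars_jacChain' k n).symm

lemma exists_jacRad_pow_eq_bot [FiniteDimensional k A] :
    ∃ n : ℕ, (jacRad k A)^(n+1) = ⊥ := by
  obtain ⟨n, hn⟩ := exists_jacChain_eq_bot' k A
  refine ⟨n, ?_⟩
  rw [jacRad_pow_eq n, hn]
  simp

lemma jacRad_pow_succ_le (m : ℕ) : (jacRad k A)^(m+2) ≤ (jacRad k A)^(m+1) :=
  calc (jacRad k A)^(m+2) = Submodule.restrictScalars k (jacChain' A (m+1)) := jacRad_pow_eq (m+1)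
    _ ≤ Submodule.restrictScalars k (jacChain' A m) :=
        restrictScalars_mono' k (jacChain_antitone' m)
    _ = (jacRad k A)^(m+1) := (jacRad_pow_eq m).symm

lemma IsDerivation.map_pow_mem {f : Module.End k A} (hf : IsDerivation f) {m : ℕ}
    (hr : LinearMap.range f ≤ (jacRad k A)^(m+1)) :
    ∀ s, ∀ x ∈ (jacRad k A)^(s+1), f x ∈ (jacRad k A)^(m+s+1) := by
  intro s
  induction s with
  | zero => exact fun x _root_hx => hr ⟨x, rfl⟩
  | succ s ih =>
      intro x hx
      have hx' : x ∈ (jacRad k A)^(s+1) * (jacRad k A) := by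
        rw [← pow_succ]; exact hx
      refine Submodule.mul_induction_on hx' (fun a ha b hb => ?_)
        (fun y z hy hz => by rw [map_add]; exact add_mem hy hz)
      rw [hf a b]
      refine add_mem ?_ ?_
      · have h1 := Submodule.mul_mem_mul (ih a ha) hb
        rw [← pow_succ] at h1
        exact h1
      · have h2 := Submodule.mul_mem_mul ha (hr ⟨b, rfl⟩)
        rw [← pow_add] at h2
        have he : (s+1)+(m+1) = m + (s + 1) + 1 := by omega
        rw [he] at h2
        exact h2

lemma lie_mem_derivRadLie {f g : Module.End k A} {a b : ℕ}
    (hf : f ∈ derivRadLie k A (a+1)) (hg : g ∈ derivRadLie k A (b+1)) :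
    ⁅f, g⁆ ∈ derivRadLie k A (a+b+1) := by
  obtain ⟨hfd, hfr⟩ := hf
  obtain ⟨hgd, hgr⟩ := hg
  refine ⟨hfd.lie hgd, ?_⟩
  rintro x ⟨y, rfl⟩
  have happ : ⁅f, g⁆ y = f (g y) - g (f y) := by
    simp [Ring.lie_def, LinearMap.sub_apply, Module.End.mul_apply]
  rw [happ]
  have h1 : f (g y) ∈ (jacRad k A)^(a+b+1) := hfd.map_pow_mem hfr b (g y) (hgr ⟨y, rfl⟩)
  have h2 : g (f y) ∈ (jacRad k A)^(b+a+1) := hgd.map_pow_mem hgr a (f y) (hfr ⟨y, rfl⟩)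
  have he : b + a + 1 = a + b + 1 := by omega
  rw [he] at h2
  exact sub_mem h1 h2

lemma derivRadLie_succ_le (m : ℕ) : derivRadLie k A (m+2) ≤ derivRadLie k A (m+1) :=
  fun f hf => ⟨hf.1, le_trans hf.2 (jacRad_pow_succ_le m)⟩

variable (k A) in
/-- The image of `Der_{m+1}(A)` in `HH^1(A)`, as a Lie ideal (using surjectivity of
`Der_1(A) → HH^1(A)`). -/
def Dideal
    (hsurj : ∀ x : HH1 k A, ∃ f : derivLie k A, (f : Module.End k A) ∈ derivRadLie k A 1 ∧
      LieSubmodule.Quotient.mk (N := innerIdeal k A) f = x) (m : ℕ) :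
    LieIdeal k (HH1 k A) where
  carrier := {x | ∃ f : derivLie k A, (f : Module.End k A) ∈ derivRadLie k A (m+1) ∧
      LieSubmodule.Quotient.mk (N := innerIdeal k A) f = x}
  add_mem' := by
    rintro x y ⟨f, hf, rfl⟩ ⟨g, hg, rfl⟩
    exact ⟨f + g, add_mem hf hg, lieMk_add _ _ _⟩
  zero_mem' := ⟨0, zero_mem _, rfl⟩
  smul_mem' := by
    rintro c x ⟨f, hf, rfl⟩
    exact ⟨c • f, LieSubalgebra.smul_mem _ c hf, lieMk_smul _ _ _⟩
  lie_mem := by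
    rintro x y ⟨g, hg, rfl⟩
    obtain ⟨f, hf1, hfx⟩ := hsurj x
    refine ⟨⁅f, g⁆, ?_, ?_⟩
    · have h := lie_mem_derivRadLie (a := 0) (b := m) hf1 hg
      rwa [Nat.zero_add] at h
    · rw [LieSubmodule.Quotient.mk_bracket, hfx]

lemma mem_Dideal {hsurj : ∀ x : HH1 k A, ∃ f : derivLie k A,
      (f : Module.End k A) ∈ derivRadLie k A 1 ∧
      LieSubmodule.Quotient.mk (N := innerIdeal k A) f = x} {m : ℕ} {x : HH1 k A} :
    x ∈ Dideal k A hsurj m ↔ ∃ f : derivLie k A,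
      (f : Module.End k A) ∈ derivRadLie k A (m+1) ∧
      LieSubmodule.Quotient.mk (N := innerIdeal k A) f = x := Iff.rfl

set_option maxHeartbeats 1000000 in
variable (k A) in
/-- Auxiliary Lie submodules of `D₂` witnessing its lower central series decay. -/
def Dsub
    (hsurj : ∀ x : HH1 k A, ∃ f : derivLie k A, (f : Module.End k A) ∈ derivRadLie k A 1 ∧
      LieSubmodule.Quotient.mk (N := innerIdeal k A) f = x) (j : ℕ) :
    LieSubmodule k (Dideal k A hsurj 1) (Dideal k A hsurj 1) where
  carrier := {x | ∃ f : derivLie k A, (f : Module.End k A) ∈ derivRadLie k A (j+2) ∧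
      LieSubmodule.Quotient.mk (N := innerIdeal k A) f = (x : HH1 k A)}
  zero_mem' := ⟨0, zero_mem _, by rw [ZeroMemClass.coe_zero]; exact Submodule.Quotient.mk_zero _⟩
  add_mem' := by
    rintro x y ⟨f, hf, hf2⟩ ⟨g, hg, hg2⟩
    refine ⟨f + g, add_mem hf hg, ?_⟩
    rw [lieMk_add, hf2, hg2, ← AddMemClass.coe_add]
  smul_mem' := by
    rintro c x ⟨f, hf, hf2⟩
    refine ⟨c • f, LieSubalgebra.smul_mem _ c hf, ?_⟩
    rw [lieMk_smul, hf2, ← SetLike.val_smul]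
  lie_mem := by
    rintro z x ⟨f, hf, hf2⟩
    obtain ⟨h, hh, hh2⟩ := z.2
    refine ⟨⁅h, f⁆, ?_, ?_⟩
    · have hb := lie_mem_derivRadLie (a := 1) (b := j+1) hh hf
      have he : 1 + (j+1) + 1 = (j+1) + 2 := by omega
      rw [he] at hb
      exact derivRadLie_succ_le (j+1) hb
    · rw [LieSubmodule.Quotient.mk_bracket, hh2, hf2]
      have hcoe : ((⁅z, x⁆ : Dideal k A hsurj 1) : HH1 k A) = ⁅(z : HH1 k A), (x : HH1 k A)⁆ := by
        simpa [LieIdeal.incl_apply] using (Dideal k A hsurj 1).incl.map_lie z x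
      rw [hcoe]

set_option maxHeartbeats 1000000 in
lemma Dideal_nilpotent [FiniteDimensional k A]
    (hsurj : ∀ x : HH1 k A, ∃ f : derivLie k A, (f : Module.End k A) ∈ derivRadLie k A 1 ∧
      LieSubmodule.Quotient.mk (N := innerIdeal k A) f = x) :
    LieModule.IsNilpotent (Dideal k A hsurj 1) (Dideal k A hsurj 1) := by
  obtain ⟨n, hn⟩ := exists_jacRad_pow_eq_bot (k := k) (A := A)
  have key : ∀ j, LieModule.lowerCentralSeries k (↥(Dideal k A hsurj 1)) (↥(Dideal k A hsurj 1)) j ≤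
      Dsub k A hsurj j := by
    intro j
    induction j with
    | zero =>
        intro x _
        exact x.2
    | succ j ih =>
        rw [LieModule.lowerCentralSeries_succ, LieSubmodule.lieIdeal_oper_eq_span]
        rw [LieSubmodule.lieSpan_le]
        rintro w ⟨z, m, rfl⟩
        have hm := ih m.2
        obtain ⟨f, hf, hf2⟩ := hm
        obtain ⟨h, hh, hh2⟩ := (z : (Dideal k A hsurj 1)).2
        refine ⟨⁅h, f⁆, ?_, ?_⟩
        · have hb := lie_mem_derivRadLie (a := 1) (b := j+1) hh hf
          have he : 1 + (j+1) + 1 = (j+1) + 2 := by omega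
          rwa [he] at hb
        · rw [LieSubmodule.Quotient.mk_bracket, hh2, hf2]
          have hcoe : ((⁅((z : (Dideal k A hsurj 1))), ((m : (Dideal k A hsurj 1)))⁆ :
              (Dideal k A hsurj 1)) : HH1 k A) =
              ⁅((z : (Dideal k A hsurj 1)) : HH1 k A),
                ((m : (Dideal k A hsurj 1)) : HH1 k A)⁆ := by
            simpa [LieIdeal.incl_apply] using
              (Dideal k A hsurj 1).incl.map_lie (z : (Dideal k A hsurj 1))
                (m : (Dideal k A hsurj 1))
          rw [hcoe]
  rw [LieModule.isNilpotent_iff k]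
  refine ⟨n, ?_⟩
  rw [eq_bot_iff]
  intro x hx
  obtain ⟨f, hf, hf2⟩ := key n hx
  have hrange : LinearMap.range (f : Module.End k A) ≤ ⊥ := by
    refine le_trans hf.2 ?_
    rw [← hn]
    exact jacRad_pow_succ_le n
  have hf0 : (f : Module.End k A) = 0 := by
    rwa [le_bot_iff, LinearMap.range_eq_bot] at hrange
  have hfz : f = 0 := Subtype.ext hf0
  rw [hfz] at hf2
  have hx0 : (x : HH1 k A) = 0 := by
    rw [← hf2]
    rfl
  have : x = 0 := Subtype.ext hx0
  simp [this]

end Stmt17Aux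

/-- Suppose that the canonical map `Der_1(A) → HH^1(A)` is surjective. Then:
(a) if `[Der_1(A), Der_1(A)] ⊆ Der_2(A) + IDer(A)`, then `HH^1(A)` is solvable;
(b) the image `D_2` of `Der_2(A)` in `HH^1(A)` is a nilpotent Lie ideal, and if
`HH^1(A) = L + D_2` for a Lie subalgebra `L`, then `HH^1(A)` is solvable iff `L` is. -/
theorem stmt17 (k A : Type*) [Field k] [Ring A] [Algebra k A] [FiniteDimensional k A]
    (hsurj : ∀ x : HH1 k A, ∃ f : derivLie k A, (f : Module.End k A) ∈ derivRadLie k A 1 ∧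
      LieSubmodule.Quotient.mk (N := innerIdeal k A) f = x) :
    -- (a)
    ((∀ f g : Module.End k A, f ∈ derivRadLie k A 1 → g ∈ derivRadLie k A 1 →
        ∃ c : A, ⁅f, g⁆ - innerDeriv k c ∈ derivRadLie k A 2) →
      LieAlgebra.IsSolvable (HH1 k A)) ∧
    -- (b)
    (∃ D2 : LieIdeal k (HH1 k A),
      (∀ x : HH1 k A, x ∈ D2 ↔ ∃ f : derivLie k A, (f : Module.End k A) ∈ derivRadLie k A 2 ∧
          LieSubmodule.Quotient.mk (N := innerIdeal k A) f = x) ∧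
      LieModule.IsNilpotent D2 D2 ∧
      (∀ L : LieSubalgebra k (HH1 k A),
        (∀ x : HH1 k A, ∃ l ∈ L, ∃ d ∈ D2, x = l + d) →
        (LieAlgebra.IsSolvable (HH1 k A) ↔ LieAlgebra.IsSolvable L))) := by
  have hnilp : LieModule.IsNilpotent (Dideal k A hsurj 1) (Dideal k A hsurj 1) := Dideal_nilpotent hsurj
  haveI := hnilp
  have hsolvD : LieAlgebra.IsSolvable (Dideal k A hsurj 1) :=
    LieAlgebra.isSolvable_of_isNilpotent _
  constructor
  · intro hab
    have habQ : IsLieAbelian (HH1 k A ⧸ Dideal k A hsurj 1) := by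
      constructor
      intro xq yq
      obtain ⟨x, rfl⟩ := lieQuotMk_surjective (Dideal k A hsurj 1) xq
      obtain ⟨y, rfl⟩ := lieQuotMk_surjective (Dideal k A hsurj 1) yq
      rw [← LieHom.map_lie]
      have hmem : ⁅x, y⁆ ∈ Dideal k A hsurj 1 := by
        obtain ⟨f, hf1, rfl⟩ := hsurj x
        obtain ⟨g, hg1, rfl⟩ := hsurj y
        obtain ⟨c, hc⟩ := hab _ _ hf1 hg1
        refine ⟨⟨⁅(f : Module.End k A), (g : Module.End k A)⁆ - innerDeriv k c, hc.1⟩, hc, ?_⟩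
        rw [← LieSubmodule.Quotient.mk_bracket]
        have hdiff : (⁅f, g⁆ -
            (⟨⁅(f : Module.End k A), (g : Module.End k A)⁆ - innerDeriv k c, hc.1⟩ :
              derivLie k A) : derivLie k A) ∈ innerIdeal k A := by
          refine ⟨c, ?_⟩
          show ((⁅f, g⁆ : derivLie k A) : Module.End k A) -
            (⁅(f : Module.End k A), (g : Module.End k A)⁆ - innerDeriv k c) = innerDeriv k c
          have hb : ((⁅f, g⁆ : derivLie k A) : Module.End k A) =
              ⁅(f : Module.End k A), (g : Module.End k A)⁆ := rfl
          rw [hb]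
          abel
        have h0 : LieSubmodule.Quotient.mk (N := innerIdeal k A) ⁅f, g⁆ -
            LieSubmodule.Quotient.mk (N := innerIdeal k A)
              (⟨⁅(f : Module.End k A), (g : Module.End k A)⁆ - innerDeriv k c, hc.1⟩ :
                derivLie k A) = 0 := by
          rw [← lieMk_sub]
          exact (LieSubmodule.Quotient.mk_eq_zero').mpr hdiff
        exact (sub_eq_zero.mp h0).symm
      show lieQuotMk (Dideal k A hsurj 1) ⁅x, y⁆ = 0
      rw [lieQuotMk_apply, LieSubmodule.Quotient.mk_eq_zero']
      exact hmem
    haveI := habQ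
    exact isSolvable_of_ideal_of_quot _ hsolvD inferInstance
  · refine ⟨Dideal k A hsurj 1, fun x => Iff.rfl, hnilp, ?_⟩
    intro L hL
    constructor
    · intro hs
      haveI := hs
      have hinj : Function.Injective (L.incl : L →ₗ⁅k⁆ HH1 k A) :=
        fun a b hab => Subtype.ext (by simpa using hab)
      exact hinj.lieAlgebra_isSolvable
    · intro hs
      haveI := hs
      have hsurj2 : Function.Surjective ((lieQuotMk (Dideal k A hsurj 1)).comp L.incl) := by
        intro q
        obtain ⟨x, rfl⟩ := lieQuotMk_surjective _ q
        obtain ⟨l, hl, d, hd, hx⟩ := hL x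
        refine ⟨⟨l, hl⟩, ?_⟩
        have hd0 : lieQuotMk (Dideal k A hsurj 1) d = 0 := by
          rw [lieQuotMk_apply, LieSubmodule.Quotient.mk_eq_zero']
          exact hd
        rw [LieHom.comp_apply, hx, lieQuotMk_add, hd0, add_zero]
        rfl
      have hq : LieAlgebra.IsSolvable (HH1 k A ⧸ Dideal k A hsurj 1) :=
        hsurj2.lieAlgebra_isSolvable
      exact isSolvable_of_ideal_of_quot _ hsolvD hq

end HHPaper
end
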